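/- Let σ be a set function on subsets of V, nonnegative, with σ(∅) = 0, satisfying the approximate submodular decrease condition: for all S ⊆ T and x, Δ_x σ(S) ≥ Δ_x σ(T) − ε, where Δ_x σ(S) = σ(S∪{x}) − σ(S). Suppose the greedy algorithm picks a_i maximizing Δ_{a_i}σ(A_{i−1}) at each step, and that an optimal set C of size o satisfies σ(C) ≥ P. Then P − σ(A_i) ≤ o·(σ(A_{i+1}) − σ(A_i) + ε) for all i, and consequently P − σ(A_i) ≤ P·(1 − 1/o)^i + ε·o. -/

import Mathlib

/-- greedy analysis under approximate submodularity. If `σ` is a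
nonnegative monotone set function with `σ(∅)=0` and
`Δ_x σ(S) ≥ Δ_x σ(T) − ε` for all `S ⊆ T`, the greedy sequence `A_i` picks at each
step an element maximizing the marginal gain, and an optimal set `C` of size `o`
satisfies `σ(C) ≥ P`, then `P − σ(A_i) ≤ o·(σ(A_{i+1}) − σ(A_i) + ε)` for all `i`,
and consequently `P − σ(A_i) ≤ P·(1 − 1/o)^i + ε·o`. -/
theorem stmt11 {V : Type*} [DecidableEq V] [Fintype V]
    (σ : Finset V → ℝ) (ε P : ℝ)
    (hσ0 : σ ∅ = 0) (hσnn : ∀ S, 0 ≤ σ S)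
    (hmono : ∀ S T : Finset V, S ⊆ T → σ S ≤ σ T)
    (hε : 0 ≤ ε)
    (hsub : ∀ S T : Finset V, S ⊆ T → ∀ x : V,
      σ (insert x T) - σ T - ε ≤ σ (insert x S) - σ S)
    (a : ℕ → V) (A : ℕ → Finset V) (hA0 : A 0 = ∅)
    (hAs : ∀ i, A (i + 1) = insert (a (i + 1)) (A i))
    (hgreedy : ∀ i, ∀ x : V, σ (insert x (A i)) - σ (A i) ≤ σ (A (i + 1)) - σ (A i))
    (C : Finset V) (o : ℕ) (ho : 1 ≤ o) (hCcard : C.card = o) (hC : P ≤ σ C) :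
    (∀ i, P - σ (A i) ≤ o * (σ (A (i + 1)) - σ (A i) + ε))
    ∧ ∀ i, P - σ (A i) ≤ P * (1 - 1 / (o : ℝ)) ^ i + ε * o := by
  have ho' : (0:ℝ) < o := by exact_mod_cast ho
  have hone : (o:ℝ) ≠ 0 := ne_of_gt ho'
  have key : ∀ i, P - σ (A i) ≤ o * (σ (A (i + 1)) - σ (A i) + ε) := by
    intro i
    have tele : ∀ S : Finset V,
        σ (A i ∪ S) ≤ σ (A i) + ∑ c ∈ S, (σ (insert c (A i)) - σ (A i) + ε) := by
      intro S
      induction S using Finset.induction_on with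
      | empty => simp
      | @insert x s hx ih =>
        have h1 : A i ∪ insert x s = insert x (A i ∪ s) := Finset.union_insert _ _ _
        have h2 := hsub (A i) (A i ∪ s) Finset.subset_union_left x
        rw [h1, Finset.sum_insert hx]
        linarith
    have h3 : P ≤ σ (A i ∪ C) :=
      le_trans hC (hmono _ _ Finset.subset_union_right)
    have h4 : ∑ c ∈ C, (σ (insert c (A i)) - σ (A i) + ε)
        ≤ C.card • (σ (A (i + 1)) - σ (A i) + ε) := by
      apply Finset.sum_le_card_nsmul
      intro x _
      have := hgreedy i x
      linarith
    rw [hCcard, nsmul_eq_mul] at h4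
    have := tele C
    linarith
  refine ⟨key, ?_⟩
  obtain ⟨r, hr⟩ : ∃ r : ℝ, r = 1 - 1 / (o:ℝ) := ⟨_, rfl⟩
  simp only [← hr]
  have hr0 : 0 ≤ r := by
    rw [hr]
    have : 1 / (o:ℝ) ≤ 1 := by
      rw [div_le_one ho']
      exact_mod_cast ho
    linarith
  have hεo : 0 ≤ ε * o := mul_nonneg hε (le_of_lt ho')
  intro i
  induction i with
  | zero => simp [hA0, hσ0]; linarith
  | succ i ih =>
    have h2 : (o:ℝ) * (P - σ (A (i + 1))) ≤ ((o:ℝ) - 1) * (P - σ (A i)) + o * ε := by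
      nlinarith [key i]
    have h1 : P - σ (A (i + 1)) ≤ r * (P - σ (A i)) + ε := by
      have h3 : P - σ (A (i + 1)) ≤ (((o:ℝ) - 1) * (P - σ (A i)) + o * ε) / o := by
        rw [le_div_iff₀ ho']
        linarith [h2]
      have h4 : (((o:ℝ) - 1) * (P - σ (A i)) + o * ε) / o = r * (P - σ (A i)) + ε := by
        rw [hr]; field_simp
      linarith [h3, h4.le, h4.ge]
    have h5 : r * (P - σ (A i)) ≤ r * (P * r ^ i + ε * o) :=
      mul_le_mul_of_nonneg_left ih hr0
    have h6 : r * (P * r ^ i + ε * o) + ε = P * r ^ (i + 1) + ε * o := by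
      have hro : r * (o:ℝ) = o - 1 := by rw [hr, sub_mul, one_div, inv_mul_cancel₀ hone, one_mul]
      rw [pow_succ]; linear_combination ε * hro
    linarith
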